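/- Two tiles P and P′ intersect (as subsets of ℝ²) if and only if P ≤ P′ or P′ ≤ P. -/
import Mathlib


open MeasureTheory Set

/-- The Walsh functions `w_l : ℝ → ℝ`, defined recursively by
`w_0 = χ_{[0,1)}`, `w_{2l}(x) = w_l(2x) + w_l(2x−1)`,
`w_{2l+1}(x) = w_l(2x) − w_l(2x−1)`. -/
noncomputable def walsh : ℕ → ℝ → ℝ
  | 0, x => if x ∈ Set.Ico (0:ℝ) 1 then 1 else 0
  | (n+1), x =>
      if (n+1) % 2 = 0 then walsh ((n+1)/2) (2*x) + walsh ((n+1)/2) (2*x - 1)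
      else walsh ((n+1)/2) (2*x) - walsh ((n+1)/2) (2*x - 1)
  decreasing_by all_goals exact Nat.div_lt_self (Nat.succ_pos n) one_lt_two

/-- A tile `[2^{-k}n, 2^{-k}(n+1)) × [2^k l, 2^k(l+1))`:
a half-open dyadic rectangle of area one. -/
structure Tile where
  k : ℤ
  n : ℤ
  l : ℤ
deriving DecidableEq

namespace Tile

/-- The time interval `I_P = [2^{-k}n, 2^{-k}(n+1))` of a tile. -/
noncomputable def I (p : Tile) : Set ℝ := Set.Ico ((2:ℝ)^(-p.k) * p.n) ((2:ℝ)^(-p.k) * (p.n+1))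

/-- The frequency interval `ω_P = [2^k l, 2^k(l+1))` of a tile. -/
noncomputable def freq (p : Tile) : Set ℝ := Set.Ico ((2:ℝ)^(p.k) * p.l) ((2:ℝ)^(p.k) * (p.l+1))

/-- The tile as a subset `I_P × ω_P` of the time-frequency plane. -/
noncomputable def area (p : Tile) : Set (ℝ × ℝ) := p.I ×ˢ p.freq

/-- The length `|I_P| = 2^{-k}` of the time interval of a tile. -/
noncomputable def len (p : Tile) : ℝ := (2:ℝ)^(-p.k)

/-- The center `ξ_P` of the frequency interval of a tile. -/
noncomputable def ξ (p : Tile) : ℝ := (2:ℝ)^(p.k) * ((p.l : ℝ) + 1/2)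

/-- The tile order: `p < q` iff `I_p ⊊ I_q` and `ω_q ⊆ ω_p`. -/
def lt (p q : Tile) : Prop := p.I ⊂ q.I ∧ q.freq ⊆ p.freq

/-- `p ≤ q` iff `p < q` or `p = q`. -/
def le (p q : Tile) : Prop := Tile.lt p q ∨ p = q

/-- The Walsh wave packet `φ_P(x) = 2^{k/2} w_l(2^k x − n)` of a tile. -/
noncomputable def wp (p : Tile) : ℝ → ℝ :=
  fun x => Real.sqrt ((2:ℝ)^(p.k)) * walsh p.l.toNat ((2:ℝ)^(p.k) * x - p.n)

end Tile

/-- A quartile `[2^{-k}n, 2^{-k}(n+1)) × [2^{k+2}l, 2^{k+2}(l+1))`: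
a dyadic rectangle of area four. -/
structure Quartile where
  k : ℤ
  n : ℤ
  l : ℤ
deriving DecidableEq

namespace Quartile

/-- The time interval `I_P` of a quartile. -/
noncomputable def I (P : Quartile) : Set ℝ := Set.Ico ((2:ℝ)^(-P.k) * P.n) ((2:ℝ)^(-P.k) * (P.n+1))

/-- The length `|I_P| = 2^{-k}` of the time interval of a quartile. -/
noncomputable def len (P : Quartile) : ℝ := (2:ℝ)^(-P.k)

/-- The `j`-th sub-tile `P_j = I_P × [2^k(4l+j−1), 2^k(4l+j))` of a quartile,
for `j = 1, 2, 3`. -/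
def tile (P : Quartile) (j : ℕ) : Tile := ⟨P.k, P.n, 4*P.l + ((j - 1 : ℕ) : ℤ)⟩

end Quartile

/-- `T` is an `i`-tree with top `top`: `P_i ≤ top_i` for all `P ∈ T`. -/
def IsTree (i : ℕ) (top : Quartile) (T : Finset Quartile) : Prop :=
  ∀ P ∈ T, Tile.le (P.tile i) (top.tile i)

/-- `size_j((a_P)_{P∈Ps})`: the sup over trees `T ⊆ Ps` which are `i`-trees for
some `i ≠ j` of `(|I_T|⁻¹ Σ_{P∈T} |a_{P_j}|²)^{1/2}`. -/
noncomputable def size (Ps : Finset Quartile) (j : ℕ) (a : Quartile → ℂ) : ℝ :=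
  sSup ((fun p : Quartile × Finset Quartile =>
      Real.sqrt ((∑ P ∈ p.2, ‖a P‖^2) / p.1.len)) ''
    {p | p.2 ⊆ Ps ∧ ∃ i ∈ ({1,2,3} : Set ℕ), i ≠ j ∧ IsTree i p.1 p.2})

/-- `energy_j((a_P)_{P∈Ps})`: the sup over subsets `D ⊆ Ps` with
`{P_j : P ∈ D}` pairwise disjoint of `(Σ_{P∈D} |a_{P_j}|²)^{1/2}`. -/
noncomputable def energy (Ps : Finset Quartile) (j : ℕ) (a : Quartile → ℂ) : ℝ :=
  sSup ((fun D : Finset Quartile => Real.sqrt (∑ P ∈ D, ‖a P‖^2)) ''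
    {D | D ⊆ Ps ∧ ∀ P ∈ D, ∀ P' ∈ D, P ≠ P' →
      Disjoint (P.tile j).area (P'.tile j).area})

/-- The `L^{1,∞}(I)` quasinorm `sup_{λ>0} λ |{x ∈ I : |g(x)| > λ}|`. -/
noncomputable def weakL1 (g : ℝ → ℝ) (I : Set ℝ) : ℝ :=
  sSup {r | ∃ lam : ℝ, 0 < lam ∧ r = lam * (volume {x ∈ I | lam < |g x|}).toReal}

/-- The square function `(Σ_{P∈T} |a_{P_j}|² χ_{I_P}/|I_P|)^{1/2}` of a tree. -/
noncomputable def treeFn (T : Finset Quartile) (a : Quartile → ℂ) : ℝ → ℝ :=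
  fun x => Real.sqrt (∑ P ∈ T, ‖a P‖^2 * (P.I.indicator (fun _ => (1:ℝ)) x) / P.len)

/-- Dyadic intervals are nonempty. -/
lemma dy_nonempty (k n : ℤ) :
    (Set.Ico ((2:ℝ)^k * n) ((2:ℝ)^k * (n+1))).Nonempty := by
  refine ⟨(2:ℝ)^k * n, le_refl _, ?_⟩
  have h : (0:ℝ) < (2:ℝ)^k := zpow_pos (by norm_num) _
  nlinarith

/-- Dyadic nesting: a shorter dyadic interval intersecting a longer one is contained in it. -/
lemma dy_subset {k k' n n' : ℤ} (hk : k' ≤ k)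
    (h : (Set.Ico ((2:ℝ)^k' * n') ((2:ℝ)^k' * (n'+1)) ∩
          Set.Ico ((2:ℝ)^k * n) ((2:ℝ)^k * (n+1))).Nonempty) :
    Set.Ico ((2:ℝ)^k' * n') ((2:ℝ)^k' * (n'+1)) ⊆
    Set.Ico ((2:ℝ)^k * n) ((2:ℝ)^k * (n+1)) := by
  obtain ⟨x, ⟨h1, h2⟩, h3, h4⟩ := h
  have hc : (0:ℝ) < (2:ℝ)^k' := zpow_pos (by norm_num) _
  set M : ℤ := 2 ^ (k - k').toNat with hMdef
  have hM : (2:ℝ)^k = (2:ℝ)^k' * (M : ℝ) := by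
    have : ((M : ℝ)) = (2:ℝ) ^ ((k - k') : ℤ) := by
      rw [hMdef]
      push_cast
      rw [← zpow_natCast, Int.toNat_of_nonneg (by omega)]
    rw [this, ← zpow_add₀ (by norm_num : (2:ℝ) ≠ 0)]
    ring_nf
  have key1 : M * n ≤ n' := by
    have : (2:ℝ)^k' * ((M : ℝ) * n) < (2:ℝ)^k' * (n' + 1) := by
      calc (2:ℝ)^k' * ((M : ℝ) * n) = (2:ℝ)^k * n := by rw [hM]; ring
        _ ≤ x := h3
        _ < (2:ℝ)^k' * (n' + 1) := h2
    have := (mul_lt_mul_iff_right₀ hc).mp this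
    have : ((M * n : ℤ) : ℝ) < ((n' + 1 : ℤ) : ℝ) := by push_cast; linarith
    exact_mod_cast Int.lt_add_one_iff.mp (by exact_mod_cast this)
  have key2 : n' + 1 ≤ M * (n + 1) := by
    have : (2:ℝ)^k' * (n' : ℝ) < (2:ℝ)^k' * ((M : ℝ) * (n + 1)) := by
      calc (2:ℝ)^k' * (n' : ℝ) ≤ x := h1
        _ < (2:ℝ)^k * (n + 1) := h4
        _ = (2:ℝ)^k' * ((M : ℝ) * (n + 1)) := by rw [hM]; ring
    have := (mul_lt_mul_iff_right₀ hc).mp this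
    have : ((n' : ℤ) : ℝ) < ((M * (n + 1) : ℤ) : ℝ) := by push_cast; linarith
    exact_mod_cast Int.add_one_le_iff.mpr (by exact_mod_cast this)
  intro y ⟨hy1, hy2⟩
  constructor
  · calc (2:ℝ)^k * n = (2:ℝ)^k' * ((M : ℝ) * n) := by rw [hM]; ring
      _ ≤ (2:ℝ)^k' * (n' : ℝ) := by
          apply mul_le_mul_of_nonneg_left _ hc.le
          exact_mod_cast key1
      _ ≤ y := hy1
  · calc y < (2:ℝ)^k' * (n' + 1) := hy2
      _ ≤ (2:ℝ)^k' * ((M : ℝ) * (n + 1)) := by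
          apply mul_le_mul_of_nonneg_left _ hc.le
          exact_mod_cast key2
      _ = (2:ℝ)^k * (n + 1) := by rw [hM]; ring

/-- Dyadic intervals at the same scale that intersect are equal. -/
lemma dy_eq {k n n' : ℤ}
    (h : (Set.Ico ((2:ℝ)^k * n) ((2:ℝ)^k * (n+1)) ∩
          Set.Ico ((2:ℝ)^k * n') ((2:ℝ)^k * (n'+1))).Nonempty) : n = n' := by
  obtain ⟨x, ⟨h1, h2⟩, h3, h4⟩ := h
  have hc : (0:ℝ) < (2:ℝ)^k := zpow_pos (by norm_num) _
  have e1 : (n : ℝ) < n' + 1 := by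
    have : (2:ℝ)^k * n < (2:ℝ)^k * (n' + 1) := lt_of_le_of_lt h1 h4
    exact (mul_lt_mul_iff_right₀ hc).mp this
  have e2 : (n' : ℝ) < n + 1 := by
    have : (2:ℝ)^k * n' < (2:ℝ)^k * (n + 1) := lt_of_le_of_lt h3 h2
    exact (mul_lt_mul_iff_right₀ hc).mp this
  have e1' : n < n' + 1 := by exact_mod_cast e1
  have e2' : n' < n + 1 := by exact_mod_cast e2
  omega

/-- Strict dyadic nesting when scales differ. -/
lemma dy_ssubset {k k' n n' : ℤ} (hk : k' < k)
    (h : (Set.Ico ((2:ℝ)^k' * n') ((2:ℝ)^k' * (n'+1)) ∩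
          Set.Ico ((2:ℝ)^k * n) ((2:ℝ)^k * (n+1))).Nonempty) :
    Set.Ico ((2:ℝ)^k' * n') ((2:ℝ)^k' * (n'+1)) ⊂
    Set.Ico ((2:ℝ)^k * n) ((2:ℝ)^k * (n+1)) := by
  refine (dy_subset hk.le h).ssubset_of_ne ?_
  intro heq
  have hc' : (0:ℝ) < (2:ℝ)^k' := zpow_pos (by norm_num) _
  have hc : (0:ℝ) < (2:ℝ)^k := zpow_pos (by norm_num) _
  have hne : (2:ℝ)^k' * (n' : ℝ) < (2:ℝ)^k' * (n' + 1) := by nlinarith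
  have hne2 : (2:ℝ)^k * (n : ℝ) < (2:ℝ)^k * (n + 1) := by nlinarith
  rw [Set.Ico_eq_Ico_iff (Or.inl hne)] at heq
  obtain ⟨ha, hb⟩ := heq
  have : (2:ℝ)^k' = (2:ℝ)^k := by nlinarith
  have hlt : (2:ℝ)^k' < (2:ℝ)^k := zpow_lt_zpow_right₀ (by norm_num) hk
  linarith

/-- two tiles intersect (as subsets of the plane) iff they are
comparable in the tile order. -/
theorem tile_intersect_iff_comparable (p q : Tile) :
    (p.area ∩ q.area).Nonempty ↔ Tile.le p q ∨ Tile.le q p := by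
  constructor
  · rintro ⟨⟨x, y⟩, ⟨hxp, hyp⟩, hxq, hyq⟩
    rcases lt_trichotomy p.k q.k with hk | hk | hk
    · -- q < p : I_q ⊂ I_p, freq_p ⊆ freq_q
      right; left
      constructor
      · exact dy_ssubset (by omega) ⟨x, hxq, hxp⟩
      · exact dy_subset hk.le ⟨y, hyp, hyq⟩
    · -- equal scales → p = q
      left; right
      have hn : p.n = q.n := dy_eq ⟨x, hxp, by rw [hk]; exact hxq⟩
      have hl : p.l = q.l := dy_eq ⟨y, hyp, by rw [hk]; exact hyq⟩
      cases p; cases q; simp_all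
    · -- p < q
      left; left
      constructor
      · exact dy_ssubset (by omega) ⟨x, hxp, hxq⟩
      · exact dy_subset hk.le ⟨y, hyq, hyp⟩
  · rintro ((⟨hI, hf⟩ | rfl) | (⟨hI, hf⟩ | rfl))
    · obtain ⟨x, hx⟩ := dy_nonempty (-p.k) p.n
      obtain ⟨y, hy⟩ := dy_nonempty q.k q.l
      exact ⟨(x, y), ⟨hx, hf hy⟩, hI.subset hx, hy⟩
    · obtain ⟨x, hx⟩ := dy_nonempty (-p.k) p.n
      obtain ⟨y, hy⟩ := dy_nonempty p.k p.l
      exact ⟨(x, y), ⟨hx, hy⟩, hx, hy⟩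
    · obtain ⟨x, hx⟩ := dy_nonempty (-q.k) q.n
      obtain ⟨y, hy⟩ := dy_nonempty p.k p.l
      exact ⟨(x, y), ⟨hI.subset hx, hy⟩, hx, hf hy⟩
    · obtain ⟨x, hx⟩ := dy_nonempty (-q.k) q.n
      obtain ⟨y, hy⟩ := dy_nonempty q.k q.l
      exact ⟨(x, y), ⟨hx, hy⟩, hx, hy⟩
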